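/- Finite-sample convergence to the Bayes risk, deterministic core of Theorem 5: Let N ≥ 1 be an integer, α ∈ [0,1], α̂ ∈ (0,1), C ≥ 1 and λ ≥ 0 be real numbers. Then −Cλ + ln( exp(Cλ)/(1−α̂) + N − 1 ) − α ln( α̂/(1−α̂) ) ≤ −α ln α̂ − (1−α) ln(1−α̂) + (N−1) e^{−λ}. In particular, since −α ln α̂ − (1−α) ln(1−α̂) = [−α ln α − (1−α) ln(1−α)] + [α ln(α/α̂) + (1−α) ln((1−α)/(1−α̂))] when α ∈ (0,1), the population loss is at most the Bayes risk plus the Bernoulli KL divergence KL(α‖α̂) plus (N−1)e^{−λ}. -/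

import Mathlib

/-- Finite-sample convergence to the Bayes risk, deterministic core of Theorem 5:
the population loss with the plug-in estimate `α̂` is at most
`−α ln α̂ − (1−α) ln(1−α̂) + (N−1)e^{−λ}`, and for `α ∈ (0,1)` the latter cross
entropy decomposes as Bayes risk plus the Bernoulli KL divergence `KL(α‖α̂)`. -/
theorem stmt_15 (N : ℕ) (hN : 1 ≤ N) (α αhat C lam : ℝ)
    (hα : α ∈ Set.Icc (0 : ℝ) 1) (hαhat : αhat ∈ Set.Ioo (0 : ℝ) 1)
    (hC : 1 ≤ C) (hlam : 0 ≤ lam) :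
    (-(C * lam) + Real.log (Real.exp (C * lam) / (1 - αhat) + ((N : ℝ) - 1))
        - α * Real.log (αhat / (1 - αhat))
      ≤ -(α * Real.log αhat) - (1 - α) * Real.log (1 - αhat)
          + ((N : ℝ) - 1) * Real.exp (-lam)) ∧
    (α ∈ Set.Ioo (0 : ℝ) 1 →
      -(α * Real.log αhat) - (1 - α) * Real.log (1 - αhat)
        = (-(α * Real.log α) - (1 - α) * Real.log (1 - α))
          + (α * Real.log (α / αhat) + (1 - α) * Real.log ((1 - α) / (1 - αhat)))) := by
  obtain ⟨hh0, hh1⟩ := hαhat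
  have h1 : (0:ℝ) < 1 - αhat := by linarith
  have h1ne : (1:ℝ) - αhat ≠ 0 := ne_of_gt h1
  constructor
  · set A : ℝ := Real.exp (C * lam) / (1 - αhat) with hA
    set B : ℝ := (N : ℝ) - 1 with hB
    have hApos : 0 < A := div_pos (Real.exp_pos _) h1
    have hBnn : 0 ≤ B := by
      have : (1:ℝ) ≤ (N:ℝ) := by exact_mod_cast hN
      simp [hB]; linarith
    -- log(A+B) ≤ log A + B/A
    have hlogA : Real.log A = C * lam - Real.log (1 - αhat) := by
      rw [hA, Real.log_div (Real.exp_ne_zero _) h1ne, Real.log_exp]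
    have key : Real.log (A + B) ≤ Real.log A + B / A := by
      have hx : 0 < (A + B) / A := div_pos (by linarith) hApos
      have := Real.log_le_sub_one_of_pos hx
      rw [Real.log_div (by linarith) (ne_of_gt hApos)] at this
      have h2 : (A + B) / A - 1 = B / A := by field_simp; ring
      linarith [h2 ▸ this]
    -- B/A = B*(1-αhat)*exp(-Cλ) ≤ B * exp(-λ)
    have hBA : B / A ≤ B * Real.exp (-lam) := by
      have hAeq : B / A = B * (1 - αhat) * Real.exp (-(C * lam)) := by
        rw [hA, Real.exp_neg]
        field_simp
      rw [hAeq]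
      have he : Real.exp (-(C * lam)) ≤ Real.exp (-lam) := by
        apply Real.exp_le_exp.2
        nlinarith
      have h2 : B * (1 - αhat) * Real.exp (-(C * lam)) ≤ B * 1 * Real.exp (-lam) := by
        apply mul_le_mul
        · nlinarith
        · exact he
        · positivity
        · nlinarith
      linarith [h2]
    have hlogr : Real.log (αhat / (1 - αhat)) = Real.log αhat - Real.log (1 - αhat) :=
      Real.log_div (ne_of_gt hh0) h1ne
    have := key.trans (by linarith : Real.log A + B / A ≤ Real.log A + B * Real.exp (-lam))
    rw [hlogA] at this
    rw [hlogr]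
    nlinarith [this]
  · rintro ⟨ha0, ha1⟩
    have h2 : (0:ℝ) < 1 - α := by linarith
    rw [Real.log_div (ne_of_gt ha0) (ne_of_gt hh0),
      Real.log_div (ne_of_gt h2) h1ne]
    ring
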